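/- Let K and Q be convex bodies in R^n with c(K) = 0, V(K) = 1, and V(K Δ Q) ≤ t for some t ∈ (0, 1/(4^n e)). Then ‖c(Q)‖_{K-K} ≤ 4nt. -/

import Mathlib

open MeasureTheory Metric Filter Set
open scoped RealInnerProductSpace ENNReal Topology Pointwise

noncomputable section

/-- Euclidean `n`-space. -/
abbrev Euc (n : ℕ) := EuclideanSpace ℝ (Fin n)

/-- `u` is an outer unit normal of `K` at `x`. -/
def isOuterNormal {n : ℕ} (K : Set (Euc n)) (x u : Euc n) : Prop :=
  ‖u‖ = 1 ∧ ∀ y ∈ K, ⟪y, u⟫ ≤ ⟪x, u⟫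

open scoped Classical in
/-- The Gauss map of `K`: an outer unit normal at a boundary point (junk value `0`
if none exists). -/
noncomputable def gaussMap {n : ℕ} (K : Set (Euc n)) (x : Euc n) : Euc n :=
  if h : ∃ u, isOuterNormal K x u then h.choose else 0

/-- The cone-volume measure of `K` evaluated at `ω ⊆ Sⁿ⁻¹`:
`V_K(ω) = (1/n) ∫_{ν_K⁻¹(ω)} ⟨x, ν_K(x)⟩ dH_{n-1}(x)`. -/
noncomputable def coneVolume (n : ℕ) (K : Set (Euc n)) (ω : Set (Euc n)) : ℝ :=
  (n : ℝ)⁻¹ * ∫ x in {x ∈ frontier K | gaussMap K x ∈ ω},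
      ⟪x, gaussMap K x⟫ ∂(μH[(n - 1 : ℝ)])

/-- The orthogonal projection `K|L` of `K` onto the subspace `L`. -/
noncomputable def projSet {n : ℕ} (L : Submodule ℝ (Euc n)) (K : Set (Euc n)) : Set (Euc n) :=
  (fun y => (L.orthogonalProjectionOnto y : Euc n)) '' K

lemma cone_bound {n : ℕ} {K Q : Set (Euc n)} (hK : Convex ℝ K) (hQ : Convex ℝ Q)
    (h0K : (0:Euc n) ∈ K) (hKKconv : Convex ℝ (K - K)) (habs : Absorbent ℝ (K - K))
    (hKQne : (K ∩ Q).Nonempty)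
    {x : Euc n} (hx : x ∈ Q) {σ : ℝ} (hσ0 : 0 < σ) (hσ1 : σ < 1)
    (hgauge : 1/σ + 1 < gauge (K - K) x) :
    ENNReal.ofReal ((1-σ)^n) * volume (K ∩ Q) ≤ volume (Q \ K) := by
  set C : Set (Euc n) := convexHull ℝ (insert x (K ∩ Q)) with hC
  have hCQ : C ⊆ Q := convexHull_min (insert_subset hx inter_subset_right) hQ
  set D : Set (Euc n) := (fun c => σ • x + (1-σ) • c) '' C with hD
  have hDQK : D ⊆ Q \ K := by
    rintro _ ⟨c, hc, rfl⟩
    refine ⟨hQ hx (hCQ hc) hσ0.le (by linarith) (by ring), ?_⟩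
    intro hzK
    -- decompose c as a point on a segment from x to K ∩ Q
    rw [hC, convexHull_insert hKQne, (hK.inter hQ).convexHull_eq, mem_convexJoin] at hc
    obtain ⟨x', hx', y, hy, hseg⟩ := hc
    rw [mem_singleton_iff] at hx'
    rw [hx'] at hseg
    obtain ⟨α, β, hα, hβ, hαβ, rfl⟩ := hseg
    set s : ℝ := σ + (1-σ) * α with hs
    have hsσ : σ ≤ s := by nlinarith
    have hs0 : 0 < s := lt_of_lt_of_le hσ0 hsσ
    have hyK : y ∈ K := hy.1
    have hz : σ • x + (1-σ) • (α • x + β • y) = s • x + (1-s) • y := by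
      have hβ' : β = 1 - α := by linarith
      rw [hβ', hs]
      module
    replace hzK : σ • x + (1-σ) • (α • x + β • y) ∈ K := hzK
    rw [hz] at hzK
    set z : Euc n := s • x + (1-s) • y with hzdef
    have hxrep : x = s⁻¹ • (z - y) + y := by
      have h1 : s • x = (z - y) + s • y := by rw [hzdef]; module
      have := congrArg (fun v => s⁻¹ • v) h1
      simpa [smul_smul, inv_mul_cancel₀ hs0.ne', smul_add] using this
    have hzy : gauge (K - K) (z - y) ≤ 1 := gauge_le_one_of_mem (Set.sub_mem_sub hzK hyK)
    have hyKK : gauge (K - K) y ≤ 1 := by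
      have : y - 0 ∈ K - K := Set.sub_mem_sub hyK h0K
      rw [sub_zero] at this
      exact gauge_le_one_of_mem this
    have hle : gauge (K - K) x ≤ 1/σ + 1 := by
      calc gauge (K - K) x = gauge (K - K) (s⁻¹ • (z - y) + y) := by rw [← hxrep]
        _ ≤ gauge (K - K) (s⁻¹ • (z - y)) + gauge (K - K) y := gauge_add_le hKKconv habs _ _
        _ = s⁻¹ * gauge (K - K) (z - y) + gauge (K - K) y := by
            rw [gauge_smul_of_nonneg (inv_nonneg.2 hs0.le)]; rfl
        _ ≤ s⁻¹ * 1 + 1 := by gcongr <;> positivity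
        _ ≤ 1/σ + 1 := by
            rw [mul_one, one_div]
            have := inv_anti₀ hσ0 hsσ
            linarith
    exact absurd hgauge (not_lt.2 hle)
  have hvolD : ENNReal.ofReal ((1-σ)^n) * volume C = volume D := by
    have himg : D = (σ • x) +ᵥ ((1-σ) • C) := by
      rw [hD, ← Set.image_vadd, ← Set.image_smul, Set.image_image]; rfl
    rw [himg, measure_vadd, Measure.addHaar_smul, finrank_euclideanSpace_fin,
      abs_of_nonneg (pow_nonneg (by linarith) _)]
  calc ENNReal.ofReal ((1-σ)^n) * volume (K ∩ Q)
      ≤ ENNReal.ofReal ((1-σ)^n) * volume C := by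
        gcongr
        exact (subset_insert _ _).trans (subset_convexHull ℝ _)
    _ = volume D := hvolD
    _ ≤ volume (Q \ K) := measure_mono hDQK

set_option maxHeartbeats 1000000 in
/-- if `c(K) = 0`, `V(K) = 1` and `V(K Δ Q) ≤ t` with
`t ∈ (0, 1/(4ⁿe))`, then `‖c(Q)‖_{K-K} ≤ 4nt`. -/
theorem stmt12 {n : ℕ} (K Q : Set (Euc n)) (hK : Convex ℝ K) (hKcp : IsCompact K)
    (hKint : (interior K).Nonempty) (hcent : ∫ x in K, x ∂volume = 0)
    (hvolK : volume K = 1)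
    (hQ : Convex ℝ Q) (hQcp : IsCompact Q) (hQint : (interior Q).Nonempty)
    (t : ℝ) (ht0 : 0 < t) (ht1 : t < 1 / (4 ^ n * Real.exp 1))
    (hvol : (volume (symmDiff K Q)).toReal ≤ t) :
    gauge (K - K) ((volume Q).toReal⁻¹ • ∫ x in Q, x ∂volume) ≤ 4 * n * t := by
  rcases Nat.eq_zero_or_pos n with hn | hn
  · subst hn
    have hsub : Subsingleton (Euc 0) := ⟨fun a b => PiLp.ext fun i => Fin.elim0 i⟩
    have h0 : ((volume Q).toReal⁻¹ • ∫ x in Q, x ∂volume : Euc 0) = 0 := Subsingleton.elim _ _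
    rw [h0, gauge_zero]
    positivity
  have hn1 : (1:ℝ) ≤ (n:ℝ) := by exact_mod_cast hn
  have hE : (2.7:ℝ) < Real.exp 1 := by
    have := Real.exp_one_gt_d9; linarith
  have h4n : (4:ℝ) ≤ 4 ^ n := by
    calc (4:ℝ) = 4 ^ 1 := (pow_one _).symm
    _ ≤ 4 ^ n := pow_le_pow_right₀ (by norm_num) hn
  have ht10 : t < 1/10 := by
    have h1 : (10:ℝ) < 4 ^ n * Real.exp 1 := by nlinarith
    have h2 : (1:ℝ) / (4 ^ n * Real.exp 1) < 1/10 := by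
      apply div_lt_div_of_pos_left <;> nlinarith
    linarith
  -- measurability and finiteness
  have hKm : MeasurableSet K := hKcp.isClosed.measurableSet
  have hQm : MeasurableSet Q := hQcp.isClosed.measurableSet
  have hQfin : volume Q ≠ ∞ := hQcp.measure_lt_top.ne
  have hKfin : volume K ≠ ∞ := hKcp.measure_lt_top.ne
  have hQKfin : volume (Q \ K) ≠ ∞ := ((measure_mono diff_subset).trans_lt hQcp.measure_lt_top).ne
  have hKQfin : volume (K \ Q) ≠ ∞ := ((measure_mono diff_subset).trans_lt hKcp.measure_lt_top).ne
  have hKQIfin : volume (K ∩ Q) ≠ ∞ := ((measure_mono inter_subset_left).trans_lt hKcp.measure_lt_top).ne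
  set a : ℝ := (volume (Q \ K)).toReal with ha
  set b : ℝ := (volume (K \ Q)).toReal with hb
  have ha0 : 0 ≤ a := ENNReal.toReal_nonneg
  have hb0 : 0 ≤ b := ENNReal.toReal_nonneg
  -- a + b ≤ t
  have hab : a + b ≤ t := by
    have hsd : symmDiff K Q = (K \ Q) ∪ (Q \ K) := by
      rw [Set.symmDiff_def]
    have hdisj : Disjoint (K \ Q) (Q \ K) := disjoint_sdiff_sdiff
    have := hvol
    rw [hsd, measure_union hdisj (hQm.diff hKm), ENNReal.toReal_add hKQfin hQKfin] at this
    linarith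
  -- volume identities
  have hKsplit : (volume (K ∩ Q)).toReal = 1 - b := by
    have h := measure_inter_add_diff K hQm (μ := volume)
    rw [hvolK] at h
    have h2 := congrArg ENNReal.toReal h
    rw [ENNReal.toReal_add hKQIfin hKQfin, ENNReal.toReal_one] at h2
    linarith
  have hbt : b ≤ t := by linarith
  have hat : a ≤ t := by linarith
  have hQsplit : (volume Q).toReal = (1 - b) + a := by
    have h := measure_inter_add_diff Q hKm (μ := volume)
    have h2 := congrArg ENNReal.toReal h
    rw [ENNReal.toReal_add ((measure_mono inter_subset_left).trans_lt hQcp.measure_lt_top).ne hQKfin,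
      inter_comm, hKsplit] at h2
    linarith
  have hvolQpos : 0 < (volume Q).toReal := by rw [hQsplit]; linarith
  -- 0 ∈ K
  have hIK : IntegrableOn (fun x : Euc n => x) K volume :=
    ContinuousOn.integrableOn_compact hKcp continuous_id.continuousOn
  have hIQ : IntegrableOn (fun x : Euc n => x) Q volume :=
    ContinuousOn.integrableOn_compact hQcp continuous_id.continuousOn
  have h0K : (0 : Euc n) ∈ K := by
    have hmem : ⨍ x in K, x ∂volume ∈ K := by
      apply hK.set_average_mem hKcp.isClosed _ hKfin _ hIK
      · rw [hvolK]; exact one_ne_zero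
      · exact Eventually.mono (ae_restrict_mem hKm) fun x hx => hx
    rwa [setAverage_eq, hcent, smul_zero] at hmem
  -- gauge infrastructure
  have hKKconv : Convex ℝ (K - K) := hK.sub hK
  have hKKsymm : ∀ v ∈ K - K, -v ∈ K - K := by
    rintro v ⟨k1, h1, k2, h2, rfl⟩
    exact ⟨k2, h2, k1, h1, by rw [neg_sub]⟩
  have hKKnhds : K - K ∈ 𝓝 (0 : Euc n) := by
    obtain ⟨z, hz⟩ := hKint
    have hopen : IsOpen (interior K - {z}) := isOpen_interior.sub_right
    have hmem : (0 : Euc n) ∈ interior K - {z} := by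
      refine ⟨z, hz, z, rfl, sub_self z⟩
    have hsub : interior K - {z} ⊆ K - K :=
      sub_subset_sub interior_subset (singleton_subset_iff.2 (interior_subset hz))
    exact mem_nhds_iff.2 ⟨_, hsub, hopen, hmem⟩
  have habs : Absorbent ℝ (K - K) := absorbent_nhds_zero hKKnhds
  have hgK : ∀ y ∈ K, gauge (K - K) y ≤ 1 := fun y hy => by
    have : y - 0 ∈ K - K := Set.sub_mem_sub hy h0K
    rw [sub_zero] at this
    exact gauge_le_one_of_mem this
  -- the bound R
  set R : ℝ := 4 * n * (1 - t) - 1 with hR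
  have hR26 : (2.6:ℝ) ≤ R := by nlinarith
  -- every point of Q has gauge at most R
  have hclaim : ∀ x ∈ Q, gauge (K - K) x ≤ R := by
    intro x hx
    by_contra hgx
    push_neg at hgx
    set σ : ℝ := 1 / (R - 1) with hσ
    have hσ0 : 0 < σ := by
      have : (0:ℝ) < R - 1 := by linarith
      rw [hσ]; positivity
    have hσ1 : σ < 1 := by
      rw [hσ, div_lt_one (by linarith)]; linarith
    have hKQne : (K ∩ Q).Nonempty := by
      apply nonempty_of_measure_ne_zero (μ := volume)
      intro h
      rw [h] at hKsplit
      simp at hKsplit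
      linarith
    have hgauge : 1/σ + 1 < gauge (K - K) x := by
      rw [hσ, one_div_one_div]; linarith
    have hcone := cone_bound hK hQ h0K hKKconv habs hKQne hx hσ0 hσ1 hgauge
    -- convert to reals
    have hreal : (1 - σ)^n * (1 - b) ≤ a := by
      have h1 := ENNReal.toReal_mono hQKfin hcone
      rw [ENNReal.toReal_mul, ENNReal.toReal_ofReal (pow_nonneg (by linarith) _), hKsplit] at h1
      exact h1
    -- numeric contradiction
    have hσ38 : (3/8 : ℝ) ≤ 1 - σ := by
      rw [hσ]
      have h1 : 1 / (R - 1) ≤ 1 / (1.6 : ℝ) := by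
        apply one_div_le_one_div_of_le <;> linarith
      linarith
    have hpow : (3/8 : ℝ)^n ≤ (1 - σ)^n := pow_le_pow_left₀ (by norm_num) hσ38 n
    have h32 : (1:ℝ) ≤ (3/2)^n := by
      have := pow_le_pow_left₀ (by norm_num : (0:ℝ) ≤ 1) (by norm_num : (1:ℝ) ≤ 3/2) n
      simpa using this
    have hkey : (3/8 : ℝ)^n * (4:ℝ)^n = (3/2)^n := by
      rw [← mul_pow]; norm_num
    have htsm : t * (4 ^ n * Real.exp 1) < 1 := by
      have h := ht1
      rw [lt_div_iff₀ (by positivity)] at h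
      exact h
    have h4e : t * (4 ^ n * 2.7) < 1 := by
      have hp : (0:ℝ) ≤ 4 ^ n := by positivity
      have h5 : (4:ℝ) ^ n * 2.7 ≤ 4 ^ n * Real.exp 1 :=
        mul_le_mul_of_nonneg_left hE.le hp
      nlinarith
    -- a ≥ (3/8)^n * (1-t) but a ≤ t
    have hfin1 : (3/8 : ℝ)^n * (1 - t) ≤ t := by
      calc (3/8 : ℝ)^n * (1 - t) ≤ (1 - σ)^n * (1 - b) := by
            apply mul_le_mul hpow (by linarith) (by linarith) (pow_nonneg (by linarith) _)
        _ ≤ a := hreal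
        _ ≤ t := hat
    have hpos38 : (0:ℝ) < (3/8)^n := by positivity
    nlinarith [pow_pos (show (0:ℝ) < 4 by norm_num) n]
  -- integral decomposition
  have hIQK : IntegrableOn (fun x : Euc n => x) (Q \ K) volume := hIQ.mono_set diff_subset
  have hIQIK : IntegrableOn (fun x : Euc n => x) (Q ∩ K) volume := hIQ.mono_set inter_subset_left
  have hIKQ : IntegrableOn (fun x : Euc n => x) (K \ Q) volume := hIK.mono_set diff_subset
  have hIKIQ : IntegrableOn (fun x : Euc n => x) (K ∩ Q) volume := hIK.mono_set inter_subset_left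
  set Ip := ∫ x in Q \ K, x ∂volume with hIp
  set Iq := ∫ x in K \ Q, x ∂volume with hIq
  have hsplitQ : ∫ x in Q, x ∂volume = Ip + ∫ x in Q ∩ K, x ∂volume := by
    rw [← setIntegral_union (disjoint_sdiff_self_left.mono_right inter_subset_right)
      (hQm.inter hKm) hIQK hIQIK, Set.diff_union_inter]
  have hsplitK : Iq + ∫ x in K ∩ Q, x ∂volume = 0 := by
    rw [← setIntegral_union (disjoint_sdiff_self_left.mono_right inter_subset_right)
      (hKm.inter hQm) hIKQ hIKIQ, Set.diff_union_inter]
    exact hcent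
  have hQint_eq : ∫ x in Q, x ∂volume = Ip - Iq := by
    have h1 : ∫ x in Q ∩ K, x ∂volume = ∫ x in K ∩ Q, (x : Euc n) ∂volume := by rw [inter_comm]
    rw [hsplitQ, h1]
    have h2 : ∫ x in K ∩ Q, (x : Euc n) ∂volume = -Iq := by
      have := hsplitK
      exact eq_neg_of_add_eq_zero_right this
    rw [h2]; abel
  -- gauge of the two integrals
  have hgIp : gauge (K - K) Ip ≤ a * R := by
    rcases eq_or_ne (volume (Q \ K)) 0 with h0 | h0
    · have hz : Ip = 0 := by
        rw [hIp, Measure.restrict_eq_zero.2 h0, integral_zero_measure]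
      have haz : a = 0 := by rw [ha, h0]; simp
      rw [hz, gauge_zero, haz, zero_mul]
    · have hpmem : ⨍ x in Q \ K, x ∂volume ∈ Q :=
        hQ.set_average_mem hQcp.isClosed h0 hQKfin
          (Eventually.mono (ae_restrict_mem (hQm.diff hKm)) fun x hx => hx.1) hIQK
      have hpg : gauge (K - K) (⨍ x in Q \ K, x ∂volume) ≤ R := hclaim _ hpmem
      have haz : a ≠ 0 := ENNReal.toReal_ne_zero.2 ⟨h0, hQKfin⟩
      have hIpeq : Ip = a • ⨍ x in Q \ K, x ∂volume := by
        rw [setAverage_eq, smul_smul, measureReal_def, ← ha, mul_inv_cancel₀ haz, one_smul]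
      rw [hIpeq, gauge_smul_of_nonneg ha0, smul_eq_mul]
      exact mul_le_mul_of_nonneg_left hpg ha0
  have hgIq : gauge (K - K) Iq ≤ b := by
    rcases eq_or_ne (volume (K \ Q)) 0 with h0 | h0
    · have hz : Iq = 0 := by
        rw [hIq, Measure.restrict_eq_zero.2 h0, integral_zero_measure]
      have hbz : b = 0 := by rw [hb, h0]; simp
      rw [hz, gauge_zero, hbz]
    · have hqmem : ⨍ x in K \ Q, x ∂volume ∈ K :=
        hK.set_average_mem hKcp.isClosed h0 hKQfin
          (Eventually.mono (ae_restrict_mem (hKm.diff hQm)) fun x hx => hx.1) hIKQ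
      have hqg : gauge (K - K) (⨍ x in K \ Q, x ∂volume) ≤ 1 := hgK _ hqmem
      have hbz : b ≠ 0 := ENNReal.toReal_ne_zero.2 ⟨h0, hKQfin⟩
      have hIqeq : Iq = b • ⨍ x in K \ Q, x ∂volume := by
        rw [setAverage_eq, smul_smul, measureReal_def, ← hb, mul_inv_cancel₀ hbz, one_smul]
      rw [hIqeq, gauge_smul_of_nonneg hb0, smul_eq_mul]
      calc b * gauge (K - K) (⨍ x in K \ Q, x ∂volume) ≤ b * 1 :=
            mul_le_mul_of_nonneg_left hqg hb0
        _ = b := mul_one b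
  -- assemble
  rw [hQint_eq]
  have hgoal : gauge (K - K) ((volume Q).toReal⁻¹ • (Ip - Iq))
      ≤ (volume Q).toReal⁻¹ * (a * R + b) := by
    rw [gauge_smul_of_nonneg (inv_nonneg.2 hvolQpos.le), smul_eq_mul]
    apply mul_le_mul_of_nonneg_left _ (inv_nonneg.2 hvolQpos.le)
    calc gauge (K - K) (Ip - Iq) ≤ gauge (K - K) Ip + gauge (K - K) (-Iq) := by
          rw [show Ip - Iq = Ip + -Iq from sub_eq_add_neg _ _]
          exact gauge_add_le hKKconv habs _ _
      _ = gauge (K - K) Ip + gauge (K - K) Iq := by rw [gauge_neg hKKsymm]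
      _ ≤ a * R + b := add_le_add hgIp hgIq
  refine hgoal.trans ?_
  rw [hQsplit, inv_mul_le_iff₀ (by linarith)]
  have hbR : b ≤ b * R := le_mul_of_one_le_right hb0 (by linarith)
  have habR : (a + b) * R ≤ t * R := mul_le_mul_of_nonneg_right hab (by linarith)
  nlinarith [mul_le_mul_of_nonneg_left hbt (show (0:ℝ) ≤ 4 * n * t by positivity),
    mul_nonneg (mul_nonneg (show (0:ℝ) ≤ 4 * n by positivity) ht0.le) ha0]

end
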